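/- The polynomial Φ(x) = 40x¹² + 508x¹¹ + 1071x¹⁰ + 930x⁹ − 265x⁸ − 1464x⁷ − 1450x⁶ − 524x⁵ + 58x⁴ + 76x³ + 3x² − 6x − 1 has exactly one positive real root, and this root lies in the interval (1.105, 1.106). -/

import Mathlib

/-- `Φ` is negative on `(0, 1]` (Bernstein certificate of degree 14). -/
lemma phi_neg_aux {x : ℝ} (hx : 0 < x) (hx1 : x ≤ 1) :
    40 * x ^ 12 + 508 * x ^ 11 + 1071 * x ^ 10 + 930 * x ^ 9 - 265 * x ^ 8
      - 1464 * x ^ 7 - 1450 * x ^ 6 - 524 * x ^ 5 + 58 * x ^ 4 + 76 * x ^ 3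
      + 3 * x ^ 2 - 6 * x - 1 < 0 := by
  have h1 : (0:ℝ) ≤ 1 - x := by linarith
  have hx' : (0:ℝ) ≤ x := hx.le
  nlinarith [pow_pos hx 14, pow_nonneg h1 14,
    mul_nonneg (pow_nonneg hx' 1) (pow_nonneg h1 13),
    mul_nonneg (pow_nonneg hx' 2) (pow_nonneg h1 12),
    mul_nonneg (pow_nonneg hx' 3) (pow_nonneg h1 11),
    mul_nonneg (pow_nonneg hx' 4) (pow_nonneg h1 10),
    mul_nonneg (pow_nonneg hx' 5) (pow_nonneg h1 9),
    mul_nonneg (pow_nonneg hx' 6) (pow_nonneg h1 8),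
    mul_nonneg (pow_nonneg hx' 7) (pow_nonneg h1 7),
    mul_nonneg (pow_nonneg hx' 8) (pow_nonneg h1 6),
    mul_nonneg (pow_nonneg hx' 9) (pow_nonneg h1 5),
    mul_nonneg (pow_nonneg hx' 10) (pow_nonneg h1 4),
    mul_nonneg (pow_nonneg hx' 11) (pow_nonneg h1 3),
    mul_nonneg (pow_nonneg hx' 12) (pow_nonneg h1 2),
    mul_nonneg (pow_nonneg hx' 13) (pow_nonneg h1 1)]

/-- The derivative of `Φ` is positive on `[1, ∞)`. -/
lemma phi_deriv_pos_aux {x : ℝ} (hx : 1 ≤ x) :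
    0 < 480 * x ^ 11 + 5588 * x ^ 10 + 10710 * x ^ 9 + 8370 * x ^ 8 - 2120 * x ^ 7
      - 10248 * x ^ 6 - 8700 * x ^ 5 - 2620 * x ^ 4 + 232 * x ^ 3 + 228 * x ^ 2
      + 6 * x - 6 := by
  have h1 : (0:ℝ) ≤ x - 1 := by linarith
  nlinarith [pow_nonneg h1 2, pow_nonneg h1 3, pow_nonneg h1 4, pow_nonneg h1 5,
    pow_nonneg h1 6, pow_nonneg h1 7, pow_nonneg h1 8, pow_nonneg h1 9,
    pow_nonneg h1 10, pow_nonneg h1 11]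

/-- The degree twelve polynomial `Φ` has exactly one positive real root, and this root
lies in the interval `(1.105, 1.106)`. -/
theorem unique_positive_root_Phi :
    let Φ : ℝ → ℝ := fun x =>
      40 * x ^ 12 + 508 * x ^ 11 + 1071 * x ^ 10 + 930 * x ^ 9 - 265 * x ^ 8
        - 1464 * x ^ 7 - 1450 * x ^ 6 - 524 * x ^ 5 + 58 * x ^ 4 + 76 * x ^ 3
        + 3 * x ^ 2 - 6 * x - 1
    (∃! x : ℝ, 0 < x ∧ Φ x = 0) ∧
    ∀ x : ℝ, 0 < x → Φ x = 0 → 1.105 < x ∧ x < 1.106 := by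
  intro Φ
  have hΦdef : ∀ x : ℝ, Φ x =
      40 * x ^ 12 + 508 * x ^ 11 + 1071 * x ^ 10 + 930 * x ^ 9 - 265 * x ^ 8
        - 1464 * x ^ 7 - 1450 * x ^ 6 - 524 * x ^ 5 + 58 * x ^ 4 + 76 * x ^ 3
        + 3 * x ^ 2 - 6 * x - 1 := fun x => rfl
  -- derivative
  have hderiv : ∀ x : ℝ, HasDerivAt Φ
      (480 * x ^ 11 + 5588 * x ^ 10 + 10710 * x ^ 9 + 8370 * x ^ 8 - 2120 * x ^ 7
        - 10248 * x ^ 6 - 8700 * x ^ 5 - 2620 * x ^ 4 + 232 * x ^ 3 + 228 * x ^ 2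
        + 6 * x - 6) x := by
    intro x
    have h := (((((((((((((hasDerivAt_pow 12 x).const_mul (40:ℝ)).add
      ((hasDerivAt_pow 11 x).const_mul (508:ℝ))).add
      ((hasDerivAt_pow 10 x).const_mul (1071:ℝ))).add
      ((hasDerivAt_pow 9 x).const_mul (930:ℝ))).sub
      ((hasDerivAt_pow 8 x).const_mul (265:ℝ))).sub
      ((hasDerivAt_pow 7 x).const_mul (1464:ℝ))).sub
      ((hasDerivAt_pow 6 x).const_mul (1450:ℝ))).sub
      ((hasDerivAt_pow 5 x).const_mul (524:ℝ))).add
      ((hasDerivAt_pow 4 x).const_mul (58:ℝ))).add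
      ((hasDerivAt_pow 3 x).const_mul (76:ℝ))).add
      ((hasDerivAt_pow 2 x).const_mul (3:ℝ))).sub
      ((hasDerivAt_id x).const_mul (6:ℝ))).sub_const 1
    exact h.congr_deriv (by norm_num; ring)
  have hcont : Continuous Φ := by
    have : Φ = fun x : ℝ =>
      40 * x ^ 12 + 508 * x ^ 11 + 1071 * x ^ 10 + 930 * x ^ 9 - 265 * x ^ 8
        - 1464 * x ^ 7 - 1450 * x ^ 6 - 524 * x ^ 5 + 58 * x ^ 4 + 76 * x ^ 3
        + 3 * x ^ 2 - 6 * x - 1 := rfl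
    rw [this]; fun_prop
  -- strict monotonicity on [1, ∞)
  have hmono : StrictMonoOn Φ (Set.Ici (1:ℝ)) := by
    apply strictMonoOn_of_deriv_pos (convex_Ici 1) hcont.continuousOn
    intro x hx
    rw [interior_Ici] at hx
    rw [(hderiv x).deriv]
    exact phi_deriv_pos_aux (le_of_lt hx)
  -- evaluations at the endpoints
  have ha : Φ 1.105 < 0 := by rw [hΦdef]; norm_num
  have hb : 0 < Φ 1.106 := by rw [hΦdef]; norm_num
  have h1a : (1:ℝ) ≤ 1.105 := by norm_num
  have h1b : (1:ℝ) ≤ 1.106 := by norm_num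
  -- any positive root lies in (1.105, 1.106)
  have hloc : ∀ x : ℝ, 0 < x → Φ x = 0 → 1.105 < x ∧ x < 1.106 := by
    intro x hx hroot
    have hx1 : 1 < x := by
      by_contra h
      push_neg at h
      have := phi_neg_aux hx h
      rw [← hΦdef] at this
      linarith [this, hroot.ge]
    constructor
    · by_contra h
      push_neg at h
      have := hmono.monotoneOn (Set.mem_Ici.2 hx1.le) (Set.mem_Ici.2 h1a) h
      exact absurd hroot (ne_of_lt (lt_of_le_of_lt this ha))
    · by_contra h
      push_neg at h
      have := hmono.monotoneOn (Set.mem_Ici.2 h1b) (Set.mem_Ici.2 hx1.le) h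
      exact absurd hroot (ne_of_gt (lt_of_lt_of_le hb this))
  -- existence via the intermediate value theorem
  obtain ⟨x₀, hx₀mem, hx₀⟩ :=
    intermediate_value_Icc (by norm_num : (1.105:ℝ) ≤ 1.106) hcont.continuousOn
      (Set.mem_Icc.2 ⟨ha.le, hb.le⟩)
  have hx₀pos : 0 < x₀ := by
    have := hx₀mem.1; norm_num at this ⊢; linarith
  refine ⟨⟨x₀, ⟨hx₀pos, hx₀⟩, ?_⟩, hloc⟩
  rintro y ⟨hy, hyr⟩
  have hyloc := hloc y hy hyr
  have hx₀loc := hloc x₀ hx₀pos hx₀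
  exact hmono.injOn (Set.mem_Ici.2 (by linarith [hyloc.1]))
    (Set.mem_Ici.2 (by linarith [hx₀loc.1])) (hyr.trans hx₀.symm)
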